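/- Assume f \in C^1([0,\infty)) satisfies, for some \gamma > 0: f(u) < 0 for u \in (0,\gamma) and f(u) > 0 for u > \gamma. Let u be a positive solution of the one-dimensional problem (1), and let x_0 \in (0,1) be a point with u(x_0) = \gamma. Define q(x) = (p-1)(1-x)\,\varphi_p(u'(x)) + \varphi_p'(u'(x))\,u(x). Then q(x_0) < 0. -/

import Mathlib

open Set

/-- `φ_p(t) = t |t|^{p-2}` (real exponent), with `φ_p(0)=0`. -/
noncomputable def phi (p t : ℝ) : ℝ := t * |t| ^ (p - 2)

/-- `φ_p'(t) = (p-1) |t|^{p-2}`. -/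
noncomputable def phi' (p t : ℝ) : ℝ := (p - 1) * |t| ^ (p - 2)

/-- The derivative of a function on `[-1,1]` (one-sided at the endpoints). -/
noncomputable def du (u : ℝ → ℝ) : ℝ → ℝ := derivWithin u (Set.Icc (-1) 1)

/-- A positive (classical) solution of the one-dimensional problem (1):
`(φ_p(u'))' + λ f(u) = 0` on `(-1,1)`, `u(-1) = u(1) = 0`,
with `u ∈ C^1[-1,1]`, `φ_p ∘ u' ∈ C^1((-1,1))`, and `u > 0` on `(-1,1)`. -/
structure Sol1D (p lam : ℝ) (f : ℝ → ℝ) (u : ℝ → ℝ) : Prop where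
  reg : ContDiffOn ℝ 1 u (Set.Icc (-1) 1)
  reg' : ContDiffOn ℝ 1 (fun x => phi p (du u x)) (Set.Ioo (-1) 1)
  pos : ∀ x ∈ Set.Ioo (-1:ℝ) 1, 0 < u x
  bcm : u (-1) = 0
  bc1 : u 1 = 0
  ode : ∀ x ∈ Set.Ioo (-1:ℝ) 1,
    deriv (fun y => phi p (du u y)) x + lam * f (u x) = 0

/-- A solution of the linearized problem (4) at `u`:
`(φ_p'(u') w')' + λ f'(u) w = 0` on `(-1,1)`, `w(-1) = w(1) = 0`. -/
structure Lin1D (p lam : ℝ) (f : ℝ → ℝ) (u w : ℝ → ℝ) : Prop where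
  reg : ContDiffOn ℝ 1 w (Set.Icc (-1) 1)
  reg' : ContDiffOn ℝ 1 (fun x => phi' p (du u x) * du w x) (Set.Ioo (-1) 1)
  ode : ∀ x ∈ Set.Ioo (-1:ℝ) 1,
    deriv (fun y => phi' p (du u y) * du w y) x + lam * deriv f (u x) * w x = 0
  bcm : w (-1) = 0
  bc1 : w 1 = 0

lemma abs_rpow_deriv {q : ℝ} (hq : 1 < q) (t : ℝ) :
    HasDerivAt (fun s : ℝ => |s| ^ q) (q * t * |t| ^ (q - 2)) t := by
  rcases lt_trichotomy t 0 with ht | rfl | ht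
  · have h1 : HasDerivAt (fun s : ℝ => (-s) ^ q) (q * (-t) ^ (q - 1) * (-1)) t := by
      have := (Real.hasDerivAt_rpow_const (p := q) (x := -t) (Or.inl (by linarith)))
      exact this.comp t (hasDerivAt_neg t)
    have h2 : (fun s : ℝ => |s| ^ q) =ᶠ[nhds t] (fun s : ℝ => (-s) ^ q) := by
      filter_upwards [Iio_mem_nhds ht] with s hs
      rw [abs_of_neg hs]
    have h3 : q * (-t) ^ (q - 1) * (-1) = q * t * |t| ^ (q - 2) := by
      rw [abs_of_neg ht]
      have : (-t) ^ (q - 1) = (-t) ^ (q - 2) * (-t) := by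
        rw [← Real.rpow_add_one (by linarith : (-t) ≠ 0)]; ring_nf
      rw [this]; ring
    exact h3 ▸ h1.congr_of_eventuallyEq h2
  · rw [hasDerivAt_iff_tendsto_slope]
    simp only [mul_zero, zero_mul, abs_zero]
    rw [tendsto_zero_iff_abs_tendsto_zero]
    have hb : ∀ s : ℝ, s ≠ 0 → |slope (fun s : ℝ => |s| ^ q) 0 s| = |s| ^ (q - 1) := by
      intro s hs
      rw [slope_def_field]
      simp only [abs_zero, Real.zero_rpow (by linarith : q ≠ 0), sub_zero, zero_sub]
      rw [div_eq_mul_inv, abs_mul, abs_inv,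
        abs_of_nonneg (Real.rpow_nonneg (abs_nonneg s) q),
        Real.rpow_sub (abs_pos.2 hs), Real.rpow_one, div_eq_mul_inv]
    have hc : Filter.Tendsto (fun s : ℝ => |s| ^ (q - 1)) (nhdsWithin 0 {(0:ℝ)}ᶜ) (nhds 0) := by
      have : ContinuousAt (fun s : ℝ => |s| ^ (q - 1)) 0 := by
        exact (Real.continuousAt_rpow_const _ _ (Or.inr (by linarith))).comp continuous_abs.continuousAt
      have h0 : |(0:ℝ)| ^ (q - 1) = 0 := by
        simp [Real.zero_rpow (by linarith : q - 1 ≠ 0)]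
      have := this.continuousWithinAt (s := {(0:ℝ)}ᶜ)
      rw [ContinuousWithinAt, h0] at this
      exact this
    refine hc.congr' ?_
    filter_upwards [self_mem_nhdsWithin] with s hs
    exact (hb s hs).symm
  · have h1 : HasDerivAt (fun s : ℝ => s ^ q) (q * t ^ (q - 1)) t :=
      Real.hasDerivAt_rpow_const (Or.inl (by linarith))
    have h2 : (fun s : ℝ => |s| ^ q) =ᶠ[nhds t] (fun s : ℝ => s ^ q) := by
      filter_upwards [Ioi_mem_nhds ht] with s hs
      rw [abs_of_pos hs]
    have h3 : q * t ^ (q - 1) = q * t * |t| ^ (q - 2) := by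
      rw [abs_of_pos ht]
      have : t ^ (q - 1) = t ^ (q - 2) * t := by
        rw [← Real.rpow_add_one (by linarith : t ≠ 0)]; ring_nf
      rw [this]; ring
    exact h3 ▸ h1.congr_of_eventuallyEq h2

lemma phi_of_nonneg {p a : ℝ} (hp : 1 < p) (ha : 0 ≤ a) : phi p a = a ^ (p - 1) := by
  rcases eq_or_lt_of_le ha with rfl | ha'
  · simp [phi, Real.zero_rpow (by linarith : p - 1 ≠ 0)]
  · rw [phi, abs_of_pos ha', mul_comm, ← Real.rpow_add_one (ne_of_gt ha')]
    norm_num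
    ring_nf

lemma phi_neg (p a : ℝ) : phi p (-a) = - phi p a := by
  simp [phi]

lemma phi_strictMono {p : ℝ} (hp : 1 < p) : StrictMono (phi p) := by
  have key : ∀ a b : ℝ, 0 ≤ a → a < b → phi p a < phi p b := by
    intro a b ha hab
    rw [phi_of_nonneg hp ha, phi_of_nonneg hp (le_trans ha hab.le)]
    exact Real.rpow_lt_rpow ha hab (by linarith)
  intro a b hab
  rcases le_or_gt 0 a with ha | ha
  · exact key a b ha hab
  · rcases le_or_gt b 0 with hb | hb
    · have := key (-b) (-a) (by linarith) (by linarith)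
      rw [phi_neg, phi_neg] at this; linarith
    · calc phi p a < 0 := by
            have := key 0 (-a) le_rfl (by linarith)
            rw [phi_neg] at this
            simp [phi] at this ⊢; linarith
        _ < phi p b := by
            have := key 0 b le_rfl hb
            simp [phi] at this ⊢; linarith

lemma phi_eq_zero_iff {p : ℝ} (hp : 1 < p) {t : ℝ} : phi p t = 0 ↔ t = 0 := by
  constructor
  · intro h
    have h0 : phi p 0 = 0 := by simp [phi]
    exact (phi_strictMono hp).injective (h.trans h0.symm)
  · rintro rfl; simp [phi]

lemma abs_phi {p : ℝ} (hp : 1 < p) (t : ℝ) : |phi p t| = |t| ^ (p - 1) := by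
  rcases eq_or_ne t 0 with rfl | ht
  · simp [phi, Real.zero_rpow (by linarith : p - 1 ≠ 0)]
  · rw [phi, abs_mul, abs_of_nonneg (Real.rpow_nonneg (abs_nonneg t) _),
      mul_comm, ← Real.rpow_add_one (abs_ne_zero.2 ht)]
    norm_num
    ring_nf



/-- Lemma 3.6: `q(x₀) < 0` where `q(x) = (p-1)(1-x)φ_p(u'(x)) + φ_p'(u'(x))u(x)`
and `u(x₀) = γ`. -/
theorem stmt16 (p : ℝ) (hp : 1 < p) (lam : ℝ) (hlam : 0 < lam)
    (f : ℝ → ℝ) (hf : ContDiffOn ℝ 1 f (Set.Ici 0))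
    (γ : ℝ) (hγ : 0 < γ)
    (hneg : ∀ v ∈ Set.Ioo (0:ℝ) γ, f v < 0)
    (hpos : ∀ v > γ, 0 < f v)
    (u : ℝ → ℝ) (hu : Sol1D p lam f u)
    (x₀ : ℝ) (hx₀ : x₀ ∈ Set.Ioo (0:ℝ) 1) (hux₀ : u x₀ = γ) :
    (p - 1) * (1 - x₀) * phi p (du u x₀) + phi' p (du u x₀) * u x₀ < 0 := by
  have hp0 : p ≠ 0 := by linarith
  have hp1 : p - 1 ≠ 0 := by linarith
  have hq : 1 < p / (p - 1) := (one_lt_div (by linarith)).2 (by linarith)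
  set q : ℝ := p / (p - 1) with hqdef
  have hIcc : ((-1:ℝ)) < 1 := by norm_num
  have hx₀J : x₀ ∈ Ioo (-1:ℝ) 1 := ⟨by linarith [hx₀.1], hx₀.2⟩
  -- basic derivative facts
  have hdu : ∀ x ∈ Ioo (-1:ℝ) 1, HasDerivAt u (du u x) x := by
    intro x hx
    have h1 : DifferentiableWithinAt ℝ u (Icc (-1) 1) x :=
      (hu.reg.differentiableOn one_ne_zero) x (Ioo_subset_Icc_self hx)
    exact h1.hasDerivWithinAt.hasDerivAt (Icc_mem_nhds hx.1 hx.2)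
  have hucont : ContinuousOn u (Icc (-1:ℝ) 1) := hu.reg.continuousOn
  have hducont : ContinuousOn (du u) (Icc (-1:ℝ) 1) :=
    hu.reg.continuousOn_derivWithin (uniqueDiffOn_Icc hIcc) le_rfl
  set v : ℝ → ℝ := fun x => phi p (du u x) with hvdef
  have hvcont : ContinuousOn v (Ioo (-1:ℝ) 1) := hu.reg'.continuousOn
  have hvd : ∀ x ∈ Ioo (-1:ℝ) 1, HasDerivAt v (-(lam * f (u x))) x := by
    intro x hx
    have h1 : DifferentiableAt ℝ v x :=
      ((hu.reg'.differentiableOn one_ne_zero) x hx).differentiableAt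
        (isOpen_Ioo.mem_nhds hx)
    have h2 := hu.ode x hx
    have h3 := h1.hasDerivAt
    rw [show deriv v x = -(lam * f (u x)) by linarith] at h3
    exact h3
  -- F and its properties
  set F : ℝ → ℝ := fun s => ∫ t in (0:ℝ)..s, f t with hFdef
  have hfca : ∀ s : ℝ, 0 < s → ContinuousAt f s := fun s hs =>
    hf.continuousOn.continuousAt (Ici_mem_nhds hs)
  have hfi : ∀ a b : ℝ, 0 ≤ a → 0 ≤ b → IntervalIntegrable f MeasureTheory.volume a b := by
    intro a b ha hb
    apply ContinuousOn.intervalIntegrable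
    apply hf.continuousOn.mono
    intro t ht
    rcases le_total a b with h | h
    · rw [uIcc_of_le h] at ht; exact le_trans ha ht.1
    · rw [uIcc_of_ge h] at ht; exact le_trans hb ht.1
  have hFd : ∀ s : ℝ, 0 < s → HasDerivAt F (f s) s := by
    intro s hs
    exact intervalIntegral.integral_hasDerivAt_right (hfi 0 s le_rfl hs.le)
      (ContinuousAt.stronglyMeasurableAtFilter isOpen_Ioi
        (fun x hx => hfca x hx) s hs)
      (hfca s hs)
  have hFneg : ∀ s : ℝ, 0 < s → s ≤ γ → F s < 0 := by
    intro s hs hsγ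
    have h1 : 0 < ∫ t in (0:ℝ)..s, -f t := by
      apply intervalIntegral.intervalIntegral_pos_of_pos_on ((hfi 0 s le_rfl hs.le).neg)
      · intro x hx
        exact neg_pos.2 (hneg x ⟨hx.1, lt_of_lt_of_le hx.2 hsγ⟩)
      · exact hs
    rw [intervalIntegral.integral_neg] at h1
    simp only [hFdef]
    linarith
  -- energy function
  set E : ℝ → ℝ := fun x => (p-1)/p * |v x| ^ q + lam * F (u x) with hEdef
  have habsv : ∀ t : ℝ, |phi p t| ^ q = |t| ^ p := by
    intro t
    rw [abs_phi hp t, ← Real.rpow_mul (abs_nonneg t)]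
    congr 1
    rw [hqdef]
    field_simp
  have hkey : ∀ t : ℝ, (p-1)/p * (q * phi p t * |phi p t| ^ (q - 2)) = t := by
    intro t
    rcases eq_or_ne t 0 with rfl | ht
    · simp [phi, mul_assoc]
    · rw [abs_phi hp t, ← Real.rpow_mul (abs_nonneg t)]
      have he : (p - 1) * (q - 2) = 2 - p := by
        rw [hqdef]
        field_simp
        ring
      rw [he, phi]
      have h1 : |t| ^ (p-2) * |t| ^ (2-p) = 1 := by
        rw [← Real.rpow_add (abs_pos.2 ht)]
        norm_num
      have h2 : (p-1)/p * q = 1 := by rw [hqdef]; field_simp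
      calc (p-1)/p * (q * (t * |t| ^ (p-2)) * |t| ^ (2-p))
          = ((p-1)/p * q) * t * (|t| ^ (p-2) * |t| ^ (2-p)) := by ring
        _ = t := by rw [h1, h2]; ring
  have hEd : ∀ x ∈ Ioo (-1:ℝ) 1, HasDerivAt E 0 x := by
    intro x hx
    have h1 : HasDerivAt (fun y => |v y| ^ q)
        (q * v x * |v x| ^ (q - 2) * (-(lam * f (u x)))) x :=
      (abs_rpow_deriv hq (v x)).comp x (hvd x hx)
    have h2 : HasDerivAt (fun y => F (u y)) (f (u x) * du u x) x :=
      (hFd (u x) (hu.pos x hx)).comp x (hdu x hx)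
    have h3 := ((h1.const_mul ((p-1)/p)).add (h2.const_mul lam))
    have h4 : (p-1)/p * (q * v x * |v x| ^ (q - 2) * (-(lam * f (u x))))
        + lam * (f (u x) * du u x) = 0 := by
      have := hkey (du u x)
      have h5 : (p-1)/p * (q * v x * |v x| ^ (q - 2) * (-(lam * f (u x))))
          = ((p-1)/p * (q * phi p (du u x) * |phi p (du u x)| ^ (q - 2))) * (-(lam * f (u x))) := by
        simp only [hvdef]; ring
      rw [h5, this]; ring
    rw [h4] at h3
    exact h3
  have hEconst : ∀ x ∈ Ioo (-1:ℝ) 1, E x = E x₀ := by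
    have key : ∀ a b : ℝ, a ∈ Ioo (-1:ℝ) 1 → b ∈ Ioo (-1:ℝ) 1 → a ≤ b → E b = E a := by
      intro a b ha hb hab
      have hsub : Icc a b ⊆ Ioo (-1:ℝ) 1 := fun z hz => ⟨lt_of_lt_of_le ha.1 hz.1, lt_of_le_of_lt hz.2 hb.2⟩
      have := constant_of_has_deriv_right_zero
        (f := E) (a := a) (b := b)
        (fun z hz => ((hEd z (hsub hz)).continuousAt).continuousWithinAt)
        (fun z hz => ((hEd z (hsub (Ico_subset_Icc_self hz))).hasDerivWithinAt))
      exact this b ⟨hab, le_rfl⟩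
    intro x hx
    rcases le_total x x₀ with h | h
    · exact (key x x₀ hx hx₀J h).symm
    · exact key x₀ x hx₀J hx h
  -- E x₀ is nonnegative
  haveI hNB : (nhdsWithin (1:ℝ) (Ioo (-1:ℝ) 1)).NeBot := by
    refine mem_closure_iff_nhdsWithin_neBot.1 ?_
    rw [closure_Ioo (by norm_num : (-1:ℝ) ≠ 1)]
    exact ⟨by norm_num, le_rfl⟩
  have hE0 : 0 ≤ E x₀ := by
    have hFcont : ContinuousOn F (Icc 0 γ) := by
      have hint : MeasureTheory.IntegrableOn f (uIcc (0:ℝ) γ) MeasureTheory.volume := by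
        apply ContinuousOn.integrableOn_compact isCompact_uIcc
        apply hf.continuousOn.mono
        rw [uIcc_of_le hγ.le]
        exact fun t ht => ht.1
      have := intervalIntegral.continuousOn_primitive_interval hint
      rwa [uIcc_of_le hγ.le] at this
    have hut : Filter.Tendsto u (nhdsWithin (1:ℝ) (Ioo (-1:ℝ) 1)) (nhds 0) := by
      have h1 : ContinuousWithinAt u (Icc (-1:ℝ) 1) 1 :=
        hucont 1 ⟨by norm_num, le_rfl⟩
      have := h1.tendsto
      rw [hu.bc1] at this
      exact this.mono_left (nhdsWithin_mono 1 Ioo_subset_Icc_self)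
    have hut2 : Filter.Tendsto u (nhdsWithin (1:ℝ) (Ioo (-1:ℝ) 1)) (nhdsWithin 0 (Icc 0 γ)) := by
      rw [tendsto_nhdsWithin_iff]
      refine ⟨hut, ?_⟩
      have hev : ∀ᶠ x in nhdsWithin (1:ℝ) (Ioo (-1:ℝ) 1), u x < γ :=
        hut.eventually_lt_const hγ
      filter_upwards [hev, self_mem_nhdsWithin] with x hx1 hx2
      exact ⟨(hu.pos x hx2).le, hx1.le⟩
    have hFt : Filter.Tendsto (fun x => lam * F (u x)) (nhdsWithin (1:ℝ) (Ioo (-1:ℝ) 1)) (nhds 0) := by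
      have h1 : Filter.Tendsto F (nhdsWithin 0 (Icc 0 γ)) (nhds (F 0)) :=
        (hFcont 0 ⟨le_rfl, hγ.le⟩).tendsto
      have hF0 : F 0 = 0 := intervalIntegral.integral_same
      rw [hF0] at h1
      have := (h1.comp hut2).const_mul lam
      simpa using this
    refine le_of_tendsto hFt ?_
    filter_upwards [self_mem_nhdsWithin] with x hx
    have h1 : E x = E x₀ := hEconst x hx
    have h2 : 0 ≤ (p-1)/p * |v x| ^ q :=
      mul_nonneg (div_nonneg (by linarith) (by linarith)) (Real.rpow_nonneg (abs_nonneg _) q)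
    have h3 : E x₀ = (p-1)/p * |v x₀| ^ q + lam * F (u x₀) := by simp only [hEdef]
    simp only [hEdef] at h1
    calc lam * F (u x) ≤ (p-1)/p * |v x| ^ q + lam * F (u x) := by linarith
      _ = E x₀ := by rw [h1]
  -- no critical points at levels in (0, γ]
  have hnocrit : ∀ x ∈ Ioo (-1:ℝ) 1, u x ≤ γ → du u x ≠ 0 := by
    intro x hx hxγ h0
    have h1 : E x = E x₀ := hEconst x hx
    have h2 : v x = 0 := by simp only [hvdef, h0]; simp [phi]
    have h3 : E x = lam * F (u x) := by
      simp only [hEdef, h2]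
      rw [abs_zero, Real.zero_rpow (by linarith : q ≠ 0)]
      ring
    have h4 : F (u x) < 0 := hFneg (u x) (hu.pos x hx) hxγ
    nlinarith
  have hc0 : du u x₀ ≠ 0 := hnocrit x₀ hx₀J (le_of_eq hux₀)
  -- slope tool
  have hslope : ∀ a ∈ Ioo (-1:ℝ) 1,
      Filter.Tendsto (slope u a) (nhdsWithin a {a}ᶜ) (nhds (du u a)) :=
    fun a ha => hasDerivAt_iff_tendsto_slope.1 (hdu a ha)
  have hev_right_neg : ∀ a ∈ Ioo (-1:ℝ) 1, du u a < 0 →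
      ∀ᶠ x in nhdsWithin a (Ioi a), u x < u a := by
    intro a ha hda
    have h2 : ∀ᶠ x in nhdsWithin a {a}ᶜ, slope u a x < 0 :=
      (hslope a ha).eventually_lt_const hda
    have h3 := h2.filter_mono (nhdsWithin_mono a (fun x (hx : x ∈ Ioi a) => hx.ne'))
    filter_upwards [h3, self_mem_nhdsWithin] with x hx1 hx2
    rw [slope_def_field] at hx1
    have hxa : 0 < x - a := sub_pos.2 hx2
    have h4 := mul_neg_of_neg_of_pos hx1 hxa
    rw [div_mul_cancel₀ _ (ne_of_gt hxa)] at h4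
    linarith
  have hev_right_pos : ∀ a ∈ Ioo (-1:ℝ) 1, 0 < du u a →
      ∀ᶠ x in nhdsWithin a (Ioi a), u a < u x := by
    intro a ha hda
    have h2 : ∀ᶠ x in nhdsWithin a {a}ᶜ, 0 < slope u a x :=
      (hslope a ha).eventually_const_lt hda
    have h3 := h2.filter_mono (nhdsWithin_mono a (fun x (hx : x ∈ Ioi a) => hx.ne'))
    filter_upwards [h3, self_mem_nhdsWithin] with x hx1 hx2
    rw [slope_def_field] at hx1
    have hxa : 0 < x - a := sub_pos.2 hx2
    have h4 := mul_pos hx1 hxa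
    rw [div_mul_cancel₀ _ (ne_of_gt hxa)] at h4
    linarith
  have hev_left_pos : ∀ a ∈ Ioo (-1:ℝ) 1, 0 < du u a →
      ∀ᶠ x in nhdsWithin a (Iio a), u x < u a := by
    intro a ha hda
    have h2 : ∀ᶠ x in nhdsWithin a {a}ᶜ, 0 < slope u a x :=
      (hslope a ha).eventually_const_lt hda
    have h3 := h2.filter_mono (nhdsWithin_mono a (fun x (hx : x ∈ Iio a) => hx.ne))
    filter_upwards [h3, self_mem_nhdsWithin] with x hx1 hx2
    rw [slope_def_field] at hx1
    have hxa : x - a < 0 := sub_neg.2 hx2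
    have h4 := mul_neg_of_pos_of_neg hx1 hxa
    rw [div_mul_cancel₀ _ (ne_of_lt hxa)] at h4
    linarith
  -- after a downward crossing, u stays below γ
  have right_lt : ∀ a ∈ Ioo (-1:ℝ) 1, u a = γ → du u a < 0 → ∀ b ∈ Ioo a 1, u b < γ := by
    intro a ha hua hda b hb
    by_contra hge
    push_neg at hge
    obtain ⟨y, hy1, hy2⟩ : ∃ y, u y < u a ∧ y ∈ Ioo a b := by
      have h2 : Ioo a b ∈ nhdsWithin a (Ioi a) :=
        mem_nhdsWithin.2 ⟨Iio b, isOpen_Iio, hb.1, fun z hz => ⟨hz.2, hz.1⟩⟩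
      exact ((hev_right_neg a ha hda).and (Filter.eventually_of_mem h2 (fun z hz => hz))).exists
    rw [hua] at hy1
    have hsub1 : Icc y b ⊆ Icc (-1:ℝ) 1 := fun z hz =>
      ⟨by linarith [hz.1, hy2.1, ha.1], by linarith [hz.2, hb.2]⟩
    obtain ⟨d, hd, hud⟩ := intermediate_value_Icc hy2.2.le (hucont.mono hsub1) ⟨hy1.le, hge⟩
    have had : a < d := lt_of_lt_of_le hy2.1 hd.1
    have hsub2 : Icc a d ⊆ Icc (-1:ℝ) 1 := fun z hz =>
      ⟨by linarith [hz.1, ha.1], by linarith [hz.2, hd.2, hb.2]⟩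
    obtain ⟨m, hm, hmin⟩ := isCompact_Icc.exists_isMinOn (nonempty_Icc.2 had.le)
      (hucont.mono hsub2)
    have hmy : u m ≤ u y := (isMinOn_iff.1 hmin) y ⟨hy2.1.le, hd.1⟩
    have hmlt : u m < γ := lt_of_le_of_lt hmy hy1
    have hma : m ≠ a := fun h => by rw [h, hua] at hmlt; exact absurd hmlt (lt_irrefl γ)
    have hmd : m ≠ d := fun h => by rw [h, hud] at hmlt; exact absurd hmlt (lt_irrefl γ)
    have hmo : m ∈ Ioo a d := ⟨lt_of_le_of_ne hm.1 (Ne.symm hma), lt_of_le_of_ne hm.2 hmd⟩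
    have hmJ : m ∈ Ioo (-1:ℝ) 1 := ⟨by linarith [hmo.1, ha.1], by linarith [hmo.2, hd.2, hb.2]⟩
    have hloc : IsLocalMin u m := hmin.isLocalMin (Icc_mem_nhds hmo.1 hmo.2)
    have : du u m = 0 := by rw [← (hdu m hmJ).deriv]; exact hloc.deriv_eq_zero
    exact hnocrit m hmJ hmlt.le this
  -- before an upward crossing, u stays below γ
  have left_lt : ∀ a ∈ Ioo (-1:ℝ) 1, u a = γ → 0 < du u a → ∀ b ∈ Ioo (-1:ℝ) a, u b < γ := by
    intro a ha hua hda b hb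
    by_contra hge
    push_neg at hge
    obtain ⟨y, hy1, hy2⟩ : ∃ y, u y < u a ∧ y ∈ Ioo b a := by
      have h2 : Ioo b a ∈ nhdsWithin a (Iio a) :=
        mem_nhdsWithin.2 ⟨Ioi b, isOpen_Ioi, hb.2, fun z hz => ⟨hz.1, hz.2⟩⟩
      exact ((hev_left_pos a ha hda).and (Filter.eventually_of_mem h2 (fun z hz => hz))).exists
    rw [hua] at hy1
    have hsub1 : Icc b y ⊆ Icc (-1:ℝ) 1 := fun z hz =>
      ⟨by linarith [hz.1, hb.1], by linarith [hz.2, hy2.2, ha.2]⟩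
    obtain ⟨d, hd, hud⟩ := intermediate_value_Icc' hy2.1.le (hucont.mono hsub1) ⟨hy1.le, hge⟩
    have hda' : d < a := lt_of_le_of_lt hd.2 hy2.2
    have hsub2 : Icc d a ⊆ Icc (-1:ℝ) 1 := fun z hz =>
      ⟨by linarith [hz.1, hd.1, hb.1], by linarith [hz.2, ha.2]⟩
    obtain ⟨m, hm, hmin⟩ := isCompact_Icc.exists_isMinOn (nonempty_Icc.2 hda'.le)
      (hucont.mono hsub2)
    have hmy : u m ≤ u y := (isMinOn_iff.1 hmin) y ⟨hd.2, hy2.2.le⟩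
    have hmlt : u m < γ := lt_of_le_of_lt hmy hy1
    have hma : m ≠ a := fun h => by rw [h, hua] at hmlt; exact absurd hmlt (lt_irrefl γ)
    have hmd : m ≠ d := fun h => by rw [h, hud] at hmlt; exact absurd hmlt (lt_irrefl γ)
    have hmo : m ∈ Ioo d a := ⟨lt_of_le_of_ne hm.1 (Ne.symm hmd), lt_of_le_of_ne hm.2 hma⟩
    have hmJ : m ∈ Ioo (-1:ℝ) 1 := ⟨by linarith [hmo.1, hd.1, hb.1], by linarith [hmo.2, ha.2]⟩
    have hloc : IsLocalMin u m := hmin.isLocalMin (Icc_mem_nhds hmo.1 hmo.2)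
    have : du u m = 0 := by rw [← (hdu m hmJ).deriv]; exact hloc.deriv_eq_zero
    exact hnocrit m hmJ hmlt.le this
  rcases hc0.lt_or_gt with hcneg | hcpos
  · -- main case : du u x₀ < 0
    have hlt := right_lt x₀ hx₀J hux₀ hcneg
    have hdneg : ∀ x ∈ Ico x₀ 1, du u x < 0 := by
      intro y hy
      rcases eq_or_lt_of_le hy.1 with rfl | hxy
      · exact hcneg
      · by_contra h
        push_neg at h
        have hsub : Icc x₀ y ⊆ Icc (-1:ℝ) 1 := fun z hz =>
          ⟨by linarith [hz.1, hx₀.1], by linarith [hz.2, hy.2]⟩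
        obtain ⟨z, hz, hz0⟩ := intermediate_value_Icc hxy.le (hducont.mono hsub) ⟨hcneg.le, h⟩
        have hzJ : z ∈ Ioo (-1:ℝ) 1 := ⟨by linarith [hz.1, hx₀.1], by linarith [hz.2, hy.2]⟩
        have hzx₀ : x₀ ≠ z := fun h' => hc0 (h' ▸ hz0)
        have : u z < γ := hlt z ⟨lt_of_le_of_ne hz.1 hzx₀, by linarith [hz.2, hy.2]⟩
        exact hnocrit z hzJ this.le hz0
    have hvmono : StrictMonoOn v (Ico x₀ 1) := by
      apply strictMonoOn_of_deriv_pos (convex_Ico x₀ 1)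
      · exact hvcont.mono (fun z hz => ⟨by linarith [hz.1, hx₀.1], hz.2⟩)
      · intro z hz
        rw [interior_Ico] at hz
        have hzJ : z ∈ Ioo (-1:ℝ) 1 := ⟨by linarith [hz.1, hx₀.1], hz.2⟩
        rw [(hvd z hzJ).deriv]
        have huz : u z ∈ Ioo 0 γ := ⟨hu.pos z hzJ, hlt z ⟨hz.1, hz.2⟩⟩
        have := hneg (u z) huz
        nlinarith
    have hdiff : DifferentiableOn ℝ u (Ioo x₀ 1) := fun z hz =>
      ((hdu z ⟨by linarith [hz.1, hx₀.1], hz.2⟩).differentiableAt).differentiableWithinAt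
    obtain ⟨ξ, hξ, hslopeξ⟩ := exists_deriv_eq_slope u hx₀.2
      (hucont.mono (fun z hz => ⟨by linarith [hz.1, hx₀.1], hz.2⟩)) hdiff
    have hξJ : ξ ∈ Ioo (-1:ℝ) 1 := ⟨by linarith [hξ.1, hx₀.1], hξ.2⟩
    have hdξ : du u ξ = (0 - γ) / (1 - x₀) := by
      rw [← (hdu ξ hξJ).deriv, hslopeξ, hu.bc1, hux₀]
    have hvlt : v x₀ < v ξ := hvmono ⟨le_rfl, hx₀.2⟩ ⟨hξ.1.le, hξ.2⟩ hξ.1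
    simp only [hvdef] at hvlt
    have hclt : du u x₀ < du u ξ := (phi_strictMono hp).lt_iff_lt.1 hvlt
    have h2 : 0 < 1 - x₀ := by linarith [hx₀.2]
    have hfinal : (1 - x₀) * du u x₀ + γ < 0 := by
      rw [hdξ] at hclt
      have := (lt_div_iff₀ h2).1 hclt
      linarith
    rw [hux₀]
    have habs : 0 < |du u x₀| ^ (p-2) := Real.rpow_pos_of_pos (abs_pos.2 hc0) _
    have hexpand : (p - 1) * (1 - x₀) * phi p (du u x₀) + phi' p (du u x₀) * γ
        = ((p-1) * |du u x₀| ^ (p-2)) * ((1 - x₀) * du u x₀ + γ) := by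
      simp only [phi, phi']; ring
    rw [hexpand]
    exact mul_neg_of_pos_of_neg (mul_pos (by linarith) habs) hfinal
  · -- impossible case : du u x₀ > 0
    exfalso
    set E0 := E x₀ with hE0def
    have hleft := left_lt x₀ hx₀J hux₀ hcpos
    -- the last γ-crossing x₁ ≥ x₀
    set T : Set ℝ := {x | x ∈ Icc x₀ (1:ℝ) ∧ u x = γ} with hTdef
    have hTclosed : IsClosed T := by
      have h1 : ContinuousOn u (Icc x₀ 1) :=
        hucont.mono (fun z hz => ⟨by linarith [hz.1, hx₀.1], hz.2⟩)
      have h2 := h1.preimage_isClosed_of_isClosed isClosed_Icc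
        (isClosed_singleton (x := γ))
      exact h2
    have hTne : T.Nonempty := ⟨x₀, ⟨⟨le_rfl, hx₀.2.le⟩, hux₀⟩⟩
    have hTbdd : BddAbove T := ⟨1, fun w hw => hw.1.2⟩
    set x₁ := sSup T with hx₁def
    have hx₁T : x₁ ∈ T := hTclosed.csSup_mem hTne hTbdd
    have hx₀x₁ : x₀ ≤ x₁ := le_csSup hTbdd ⟨⟨le_rfl, hx₀.2.le⟩, hux₀⟩
    have hux₁ : u x₁ = γ := hx₁T.2
    have hx₁1 : x₁ < 1 :=
      lt_of_le_of_ne hx₁T.1.2 (fun h => by rw [h, hu.bc1] at hux₁; linarith)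
    have hx₁J : x₁ ∈ Ioo (-1:ℝ) 1 := ⟨by linarith [hx₀.1], hx₁1⟩
    -- u < γ to the right of x₁
    have hright1 : ∀ y ∈ Ioo x₁ 1, u y < γ := by
      intro y hy
      by_contra hge
      push_neg at hge
      rcases eq_or_lt_of_le hge with heq | hgt
      · have : y ∈ T := ⟨⟨by linarith [hy.1, hx₀x₁], hy.2.le⟩, heq.symm⟩
        linarith [le_csSup hTbdd this, hy.1]
      · obtain ⟨d, hd, hud⟩ := intermediate_value_Icc' hy.2.le
          (hucont.mono (fun w hw => ⟨by linarith [hw.1, hy.1, hx₁J.1], hw.2⟩))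
          (⟨by rw [hu.bc1]; exact hγ.le, hgt.le⟩ : γ ∈ Icc (u 1) (u y))
        have : d ∈ T := ⟨⟨by linarith [hd.1, hy.1, hx₀x₁], hd.2⟩, hud⟩
        linarith [le_csSup hTbdd this, hd.1, hy.1]
    -- du u x₁ < 0
    have hd1 : du u x₁ < 0 := by
      rcases (hnocrit x₁ hx₁J (le_of_eq hux₁)).lt_or_gt with h | h
      · exact h
      · exfalso
        obtain ⟨y, hy1, hy2⟩ : ∃ y, u x₁ < u y ∧ y ∈ Ioo x₁ 1 := by
          have h2 : Ioo x₁ 1 ∈ nhdsWithin x₁ (Ioi x₁) :=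
            mem_nhdsWithin.2 ⟨Iio 1, isOpen_Iio, hx₁1, fun w hw => ⟨hw.2, hw.1⟩⟩
          exact ((hev_right_pos x₁ hx₁J h).and
            (Filter.eventually_of_mem h2 (fun w hw => hw))).exists
        rw [hux₁] at hy1
        exact absurd (hright1 y hy2) (by linarith)
    -- derivative signs on the two branches
    have hdl : ∀ x ∈ Ioc (-1:ℝ) x₀, 0 < du u x := by
      intro y hy
      rcases eq_or_lt_of_le hy.2 with heq | hxy
      · rw [heq]; exact hcpos
      · by_contra h
        push_neg at h
        have hsub : Icc y x₀ ⊆ Icc (-1:ℝ) 1 := fun w hw =>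
          ⟨by linarith [hw.1, hy.1], by linarith [hw.2, hx₀.2]⟩
        obtain ⟨w, hw, hw0⟩ := intermediate_value_Icc hxy.le (hducont.mono hsub) ⟨h, hcpos.le⟩
        have hwJ : w ∈ Ioo (-1:ℝ) 1 := ⟨by linarith [hw.1, hy.1], by linarith [hw.2, hx₀.2]⟩
        have hwx₀ : w ≠ x₀ := fun h' => hc0 (h' ▸ hw0)
        have huw : u w < γ := hleft w ⟨hwJ.1, lt_of_le_of_ne hw.2 hwx₀⟩
        exact hnocrit w hwJ huw.le hw0
    have hdr : ∀ x ∈ Ico x₁ 1, du u x < 0 := by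
      intro y hy
      rcases eq_or_lt_of_le hy.1 with rfl | hxy
      · exact hd1
      · by_contra h
        push_neg at h
        have hsub : Icc x₁ y ⊆ Icc (-1:ℝ) 1 := fun w hw =>
          ⟨by linarith [hw.1, hx₁J.1], by linarith [hw.2, hy.2]⟩
        obtain ⟨w, hw, hw0⟩ := intermediate_value_Icc hxy.le (hducont.mono hsub) ⟨hd1.le, h⟩
        have hwJ : w ∈ Ioo (-1:ℝ) 1 := ⟨by linarith [hw.1, hx₁J.1], by linarith [hw.2, hy.2]⟩
        have hwx₁ : x₁ ≠ w := by
          intro h'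
          rw [← h'] at hw0
          exact (ne_of_lt hd1) hw0
        have huw : u w < γ := hright1 w ⟨lt_of_le_of_ne hw.1 hwx₁, by linarith [hw.2, hy.2]⟩
        exact hnocrit w hwJ huw.le hw0
    -- the speed function g and time map G
    set g : ℝ → ℝ := fun s => (p/(p-1) * (E0 - lam * F s)) ^ (1/p) with hgdef
    have hEgt : ∀ s : ℝ, 0 < s → s ≤ γ → 0 < E0 - lam * F s := by
      intro s h1 h2
      have h3 := hFneg s h1 h2
      nlinarith
    have hgpos' : ∀ s : ℝ, 0 < E0 - lam * F s → 0 < g s := by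
      intro s h1
      exact Real.rpow_pos_of_pos (mul_pos (div_pos (by linarith) (by linarith)) h1) _
    have hgpos : ∀ s : ℝ, 0 < s → s ≤ γ → 0 < g s := fun s h1 h2 =>
      hgpos' s (hEgt s h1 h2)
    have hgc : ∀ s : ℝ, 0 < s → ContinuousAt g s := by
      intro s hs
      have h1 : ContinuousAt (fun t => p/(p-1) * (E0 - lam * F t)) s :=
        continuousAt_const.mul (continuousAt_const.sub
          (continuousAt_const.mul (hFd s hs).continuousAt))
      exact h1.rpow_const (Or.inr (by positivity))
    have hGd : ∀ s : ℝ, 0 < s → s ≤ γ →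
        HasDerivAt (fun r => ∫ t in γ..r, (g t)⁻¹) (g s)⁻¹ s := by
      intro s hs hsγ
      apply intervalIntegral.integral_hasDerivAt_right
      · apply ContinuousOn.intervalIntegrable
        intro t ht
        have ht' : 0 < t ∧ t ≤ γ := by
          rcases le_total s γ with hsl | hsl
          · rw [uIcc_of_ge hsl] at ht
            exact ⟨lt_of_lt_of_le hs ht.1, ht.2⟩
          · rw [uIcc_of_le hsl] at ht
            exact ⟨lt_of_lt_of_le hγ ht.1, le_trans ht.2 (le_of_eq (le_antisymm hsγ hsl))⟩
        exact ((hgc t ht'.1).inv₀ (ne_of_gt (hgpos t ht'.1 ht'.2))).continuousWithinAt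
      · have h1 : ContinuousAt (fun t => E0 - lam * F t) s :=
          continuousAt_const.sub (continuousAt_const.mul (hFd s hs).continuousAt)
        have hev : ∀ᶠ t in nhds s, 0 < t ∧ 0 < E0 - lam * F t := by
          filter_upwards [Ioi_mem_nhds hs, h1.eventually_const_lt (hEgt s hs hsγ)]
            with t h2 h3
          exact ⟨h2, h3⟩
        obtain ⟨U, hU1, hU2, hU3⟩ := eventually_nhds_iff.1 hev
        apply ContinuousAt.stronglyMeasurableAtFilter hU2
          (fun t ht => ((hgc t (hU1 t ht).1).inv₀ (ne_of_gt (hgpos' t (hU1 t ht).2))))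
        exact hU3
      · exact (hgc s hs).inv₀ (ne_of_gt (hgpos s hs hsγ))
    have hgeq : ∀ x ∈ Ioo (-1:ℝ) 1, |du u x| = g (u x) := by
      intro x hx
      have h1 : E x = E0 := hEconst x hx
      have h2 : |v x| ^ q = |du u x| ^ p := by
        simp only [hvdef]; exact habsv (du u x)
      have h3 : |du u x| ^ p = p/(p-1) * (E0 - lam * F (u x)) := by
        simp only [hEdef] at h1
        have h4 : (p-1)/p * |v x| ^ q = E0 - lam * F (u x) := by linarith
        rw [← h2, ← h4]
        field_simp
      have h5 : |du u x| = (|du u x| ^ p) ^ (1/p) := by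
        rw [← Real.rpow_mul (abs_nonneg _), mul_one_div, div_self hp0, Real.rpow_one]
      rw [h5, h3]
    set G : ℝ → ℝ := fun r => ∫ t in γ..r, (g t)⁻¹ with hGdef
    -- left-branch constancy on [z, x₀], where z := x₀ + x₁ - 1
    set z := x₀ + x₁ - 1 with hzdef
    have hz1 : (-1:ℝ) < z := by simp only [hzdef]; linarith [hx₀.1, hx₀x₁]
    have hz2 : z < x₀ := by simp only [hzdef]; linarith
    have hzJ : z ∈ Ioo (-1:ℝ) 1 := ⟨hz1, by linarith [hx₀.2]⟩
    have huz : u z < γ := hleft z ⟨hz1, hz2⟩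
    have huzpos : 0 < u z := hu.pos z hzJ
    have hHl : ∀ x ∈ Icc z x₀, HasDerivAt (fun y => G (u y) - y) 0 x := by
      intro x hx
      have hxJ : x ∈ Ioo (-1:ℝ) 1 := ⟨by linarith [hx.1], by linarith [hx.2, hx₀.2]⟩
      have hxuγ : u x ≤ γ := by
        rcases eq_or_lt_of_le hx.2 with heq | hlt'
        · exact le_of_eq (by rw [heq, hux₀])
        · exact (hleft x ⟨hxJ.1, hlt'⟩).le
      have hdux : 0 < du u x := hdl x ⟨hxJ.1, hx.2⟩
      have heq2 : du u x = g (u x) := by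
        rw [← abs_of_pos hdux]; exact hgeq x hxJ
      have h1 : HasDerivAt (fun y => G (u y)) ((g (u x))⁻¹ * du u x) x :=
        (hGd (u x) (hu.pos x hxJ) hxuγ).comp x (hdu x hxJ)
      have h2 : (g (u x))⁻¹ * du u x = 1 := by
        rw [heq2]
        exact inv_mul_cancel₀ (ne_of_gt (hgpos (u x) (hu.pos x hxJ) hxuγ))
      have h3 := h1.sub (hasDerivAt_id' x)
      rw [h2] at h3
      simp only [sub_self] at h3; exact h3
    have hconst_l : G (u x₀) - x₀ = G (u z) - z :=
      constant_of_has_deriv_right_zero (f := fun y => G (u y) - y)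
        (fun y hy => (hHl y hy).continuousAt.continuousWithinAt)
        (fun y hy => (hHl y (Ico_subset_Icc_self hy)).hasDerivWithinAt)
        x₀ ⟨hz2.le, le_rfl⟩
    -- pick the point b on the right branch with u b = u z
    obtain ⟨y, hy1, hy2⟩ : ∃ y, u y < u z ∧ y ∈ Ioo x₁ 1 := by
      haveI hNB2 : (nhdsWithin (1:ℝ) (Ioo x₁ 1)).NeBot := by
        refine mem_closure_iff_nhdsWithin_neBot.1 ?_
        rw [closure_Ioo (ne_of_lt hx₁1)]
        exact ⟨hx₁1.le, le_rfl⟩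
      have hut : Filter.Tendsto u (nhdsWithin (1:ℝ) (Ioo x₁ 1)) (nhds 0) := by
        have h1 : ContinuousWithinAt u (Icc (-1:ℝ) 1) 1 := hucont 1 ⟨by norm_num, le_rfl⟩
        have h2 := h1.tendsto
        rw [hu.bc1] at h2
        exact h2.mono_left (nhdsWithin_mono 1
          (fun w hw => ⟨by linarith [hw.1, hx₁J.1], hw.2.le⟩))
      exact ((hut.eventually_lt_const huzpos).and self_mem_nhdsWithin).exists
    obtain ⟨b, hb, hub⟩ := intermediate_value_Icc' hy2.1.le
      (hucont.mono (fun w hw => ⟨by linarith [hw.1, hx₁J.1], by linarith [hw.2, hy2.2]⟩))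
      (⟨hy1.le, by rw [hux₁]; exact huz.le⟩ : u z ∈ Icc (u y) (u x₁))
    have hbx₁ : x₁ < b := by
      rcases eq_or_lt_of_le hb.1 with heq | h
      · exfalso
        rw [← heq, hux₁] at hub
        linarith
      · exact h
    have hby : b ≤ y := hb.2
    have hHr : ∀ x ∈ Icc x₁ b, HasDerivAt (fun y => G (u y) + y) 0 x := by
      intro x hx
      have hxJ : x ∈ Ioo (-1:ℝ) 1 :=
        ⟨by linarith [hx.1, hx₁J.1], by linarith [hx.2, hby, hy2.2]⟩
      have hxuγ : u x ≤ γ := by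
        rcases eq_or_lt_of_le hx.1 with heq | hlt'
        · exact le_of_eq (by rw [← heq, hux₁])
        · exact (hright1 x ⟨hlt', by linarith [hx.2, hby, hy2.2]⟩).le
      have hdux : du u x < 0 := hdr x ⟨hx.1, by linarith [hx.2, hby, hy2.2]⟩
      have heq2 : du u x = -g (u x) := by
        have := hgeq x hxJ
        rw [abs_of_neg hdux] at this
        linarith
      have h1 : HasDerivAt (fun y => G (u y)) ((g (u x))⁻¹ * du u x) x :=
        (hGd (u x) (hu.pos x hxJ) hxuγ).comp x (hdu x hxJ)
      have h2 : (g (u x))⁻¹ * du u x = -1 := by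
        rw [heq2, mul_neg, inv_mul_cancel₀ (ne_of_gt (hgpos (u x) (hu.pos x hxJ) hxuγ))]
      have h3 := h1.add (hasDerivAt_id' x)
      rw [h2] at h3
      simp only [neg_add_cancel] at h3; exact h3
    have hconst_r : G (u b) + b = G (u x₁) + x₁ :=
      constant_of_has_deriv_right_zero (f := fun y => G (u y) + y)
        (fun y hy => (hHr y hy).continuousAt.continuousWithinAt)
        (fun y hy => (hHr y (Ico_subset_Icc_self hy)).hasDerivWithinAt)
        b ⟨hbx₁.le, le_rfl⟩
    rw [hux₀] at hconst_l
    rw [hux₁, hub] at hconst_r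
    have hb1 : b = 1 := by
      have hz3 : z = x₀ + x₁ - 1 := hzdef
      linarith
    linarith [hy2.2, hby]
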